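/- Let D, l and m be positive integers with 2m ≤ 2^{l+1}D − 1. Then the perturbation σ_{2^{l+1}D−1, 2^l} + X₁ + X₂ + ⋯ + X_{2m} is balanced, i.e. S(σ_{2^{l+1}D−1, 2^l} + X₁ + ⋯ + X_{2m}) = 0, and the perturbation σ_{2^{l+1}D, 2^l+1} + X₁ + X₂ + ⋯ + X_{2m} is also balanced, i.e. S(σ_{2^{l+1}D, 2^l+1} + X₁ + ⋯ + X_{2m}) = 0. -/

import Mathlib

/-- Exponential sum of a Boolean function in `N` variables. -/
def expSum {N : ℕ} (G : (Fin N → ZMod 2) → ZMod 2) : ℤ :=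
  ∑ x : Fin N → ZMod 2, (-1 : ℤ) ^ (G x).val

/-- Elementary symmetric Boolean polynomial of degree `k` in `n` variables. -/
def sigma (n k : ℕ) (x : Fin n → ZMod 2) : ZMod 2 :=
  ∑ A ∈ Finset.powersetCard k (Finset.univ : Finset (Fin n)), ∏ i ∈ A, x i

/- ### Auxiliary material -/

lemma zmod2_cases (a : ZMod 2) : a = 0 ∨ a = 1 := by revert a; decide

/-- Hamming weight. -/
def wt {N : ℕ} (x : Fin N → ZMod 2) : ℕ := (Finset.univ.filter (fun i => x i = 1)).card

lemma wt_le {N : ℕ} (x : Fin N → ZMod 2) : wt x ≤ N := by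
  simpa [wt] using (Finset.card_filter_le Finset.univ (fun i => x i = 1)).trans
    (le_of_eq (by simp))

lemma wt_compl {N : ℕ} (x : Fin N → ZMod 2) : wt (fun i => x i + 1) = N - wt x := by
  unfold wt
  have h : (Finset.univ.filter (fun i => x i + 1 = 1)) =
      Finset.univ.filter (fun i => ¬ (x i = 1)) := by
    apply Finset.filter_congr
    intro i _
    rcases zmod2_cases (x i) with h | h <;> simp [h]
  rw [h, Finset.filter_not, Finset.card_sdiff_of_subset (Finset.filter_subset _ _)]
  simp

lemma wt_parity {N : ℕ} (x : Fin N → ZMod 2) : ((wt x : ℕ) : ZMod 2) = ∑ i, x i := by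
  unfold wt
  rw [Finset.card_filter]
  push_cast
  exact Finset.sum_congr rfl fun i _ => by rcases zmod2_cases (x i) with h | h <;> simp [h]

lemma sigma_eq_choose (n k : ℕ) (x : Fin n → ZMod 2) :
    sigma n k x = ((wt x).choose k : ZMod 2) := by
  classical
  have h1 : ∀ A : Finset (Fin n), (∏ i ∈ A, x i)
      = if A ⊆ Finset.univ.filter (fun i => x i = 1) then (1 : ZMod 2) else 0 := by
    intro A
    split_ifs with h
    · exact Finset.prod_eq_one fun i hi => (Finset.mem_filter.mp (h hi)).2
    · obtain ⟨i, hi, hx⟩ := Finset.not_subset.mp h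
      refine Finset.prod_eq_zero hi ?_
      rcases zmod2_cases (x i) with h0 | h1
      · exact h0
      · exact absurd (Finset.mem_filter.mpr ⟨Finset.mem_univ i, h1⟩) hx
  unfold sigma
  rw [Finset.sum_congr rfl fun A _ => h1 A, Finset.sum_boole]
  have h2 : (Finset.powersetCard k (Finset.univ : Finset (Fin n))).filter
      (fun A => A ⊆ Finset.univ.filter (fun i => x i = 1))
      = Finset.powersetCard k (Finset.univ.filter (fun i => x i = 1)) := by
    ext A
    simp [Finset.mem_powersetCard, Finset.mem_filter]
    tauto
  rw [h2, Finset.card_powersetCard]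
  rfl

lemma lucas2 (n k : ℕ) :
    ((n.choose k : ZMod 2)) =
      ((n % 2).choose (k % 2) : ℕ) * (((n / 2).choose (k / 2) : ℕ) : ZMod 2) := by
  haveI : Fact (Nat.Prime 2) := ⟨Nat.prime_two⟩
  have h := (Choose.choose_modEq_choose_mod_mul_choose_div_nat (n := n) (k := k) (p := 2))
  have h2 := (ZMod.natCast_eq_natCast_iff _ _ _).mpr h
  push_cast at h2 ⊢
  exact h2

lemma choose_two_pow (l : ℕ) :
    ∀ n : ℕ, ((n.choose (2^l) : ZMod 2)) = ((n / 2^l : ℕ) : ZMod 2) := by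
  induction l with
  | zero => intro n; simp [Nat.choose_one_right]
  | succ l ih =>
    intro n
    rw [lucas2]
    have h1 : 2^(l+1) % 2 = 0 := by
      have : (2:ℕ) ∣ 2^(l+1) := dvd_pow_self 2 (Nat.succ_ne_zero l)
      omega
    have h2 : 2^(l+1) / 2 = 2^l := by
      rw [pow_succ]
      exact Nat.mul_div_cancel _ (by norm_num)
    rw [h1, h2, Nat.choose_zero_right, ih, Nat.div_div_eq_div_mul, ← pow_succ']
    simp

lemma choose_two_pow_succ (l n : ℕ) (hl : 1 ≤ l) :
    ((n.choose (2^l + 1) : ZMod 2)) = ((n / 2^l : ℕ) : ZMod 2) * ((n % 2 : ℕ) : ZMod 2) := by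
  obtain ⟨l, rfl⟩ : ∃ l', l = l' + 1 := ⟨l - 1, by omega⟩
  rw [lucas2]
  have hd : (2:ℕ) ∣ 2^(l+1) := dvd_pow_self 2 (Nat.succ_ne_zero l)
  have h1 : (2^(l+1) + 1) % 2 = 1 := by omega
  have h2 : (2^(l+1) + 1) / 2 = 2^l := by
    have : 2^(l+1) = 2^l * 2 := by rw [pow_succ]
    omega
  rw [h1, h2, choose_two_pow, Nat.choose_one_right, Nat.div_div_eq_div_mul, ← pow_succ']
  ring

lemma parity_core1 (t u v : ℕ) (ht : 0 < t) (hu : u < t * 2) (hv : v < t * 2)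
    (huv : u + v = t * 2 - 1) : u / t + v / t = 1 := by
  have hp : u / t < 2 := Nat.div_lt_of_lt_mul hu
  have hq : v / t < 2 := Nat.div_lt_of_lt_mul hv
  have hur := Nat.div_add_mod u t
  have hvr := Nat.div_add_mod v t
  have hurlt : u % t < t := Nat.mod_lt _ ht
  have hvrlt : v % t < t := Nat.mod_lt _ ht
  interval_cases h1 : u / t <;> interval_cases h2 : v / t <;> omega

lemma parity_core2 (t u v : ℕ) (ht : 0 < t) (ht2 : 2 ∣ t) (hu : u < t * 2) (hv : v < t * 2)
    (huv : u + v = t * 2) (huodd : u % 2 = 1) : u / t + v / t = 1 := by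
  obtain ⟨t', rfl⟩ := ht2
  have hp : u / (2 * t') < 2 := Nat.div_lt_of_lt_mul hu
  have hq : v / (2 * t') < 2 := Nat.div_lt_of_lt_mul hv
  have hur := Nat.div_add_mod u (2 * t')
  have hvr := Nat.div_add_mod v (2 * t')
  have hurlt : u % (2 * t') < 2 * t' := Nat.mod_lt _ ht
  have hvrlt : v % (2 * t') < 2 * t' := Nat.mod_lt _ ht
  interval_cases h1 : u / (2 * t') <;> interval_cases h2 : v / (2 * t') <;> omega

lemma parity1 (l D w : ℕ) (hD : 1 ≤ D) (hw : w ≤ 2^(l+1) * D - 1) :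
    (w / 2^l) % 2 + ((2^(l+1) * D - 1 - w) / 2^l) % 2 = 1 := by
  obtain ⟨t, ht⟩ : ∃ t, 2^l = t := ⟨_, rfl⟩
  have htpos : 0 < t := ht ▸ Nat.pow_pos (n := l) (by norm_num : 0 < 2)
  have hM : 2^(l+1) = t * 2 := by rw [← ht, pow_succ]
  rw [hM] at hw ⊢
  rw [ht]
  obtain ⟨D', rfl⟩ : ∃ D', D = D' + 1 := ⟨D - 1, by omega⟩
  have hN : t * 2 * (D' + 1) = t * 2 * D' + t * 2 := by ring
  set b := t * 2 * (D' + 1) - 1 - w with hb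
  have hwb : w + b = t * 2 * D' + (t * 2 - 1) := by omega
  have hu2 : w / t % 2 = w % (t * 2) / t := (Nat.mod_mul_right_div_self w t 2).symm
  have hv2 : b / t % 2 = b % (t * 2) / t := (Nat.mod_mul_right_div_self b t 2).symm
  have hmod : (w + b) % (t * 2) = t * 2 - 1 := by
    rw [hwb, Nat.mul_add_mod]
    exact Nat.mod_eq_of_lt (by omega)
  have hult : w % (t * 2) < t * 2 := Nat.mod_lt _ (by omega)
  have hvlt : b % (t * 2) < t * 2 := Nat.mod_lt _ (by omega)
  have huvmod : (w % (t * 2) + b % (t * 2)) % (t * 2) = t * 2 - 1 := by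
    rw [← Nat.add_mod]; exact hmod
  have hk : (w % (t * 2) + b % (t * 2)) / (t * 2) < 2 :=
    Nat.div_lt_of_lt_mul (by omega)
  have hdm := Nat.div_add_mod (w % (t * 2) + b % (t * 2)) (t * 2)
  have huv : w % (t * 2) + b % (t * 2) = t * 2 - 1 := by
    interval_cases h : (w % (t * 2) + b % (t * 2)) / (t * 2) <;> omega
  rw [hu2, hv2]
  exact parity_core1 t _ _ htpos hult hvlt huv

lemma parity2 (l D w : ℕ) (hl : 1 ≤ l) (hD : 1 ≤ D) (hw : w ≤ 2^(l+1) * D)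
    (hodd : w % 2 = 1) :
    (w / 2^l) % 2 + ((2^(l+1) * D - w) / 2^l) % 2 = 1 := by
  obtain ⟨t, ht⟩ : ∃ t, 2^l = t := ⟨_, rfl⟩
  have ht2 : (2:ℕ) ∣ t := ht ▸ dvd_pow_self 2 (by omega)
  have htpos : 0 < t := ht ▸ Nat.pow_pos (n := l) (by norm_num : 0 < 2)
  have hM : 2^(l+1) = t * 2 := by rw [← ht, pow_succ]
  rw [hM] at hw ⊢
  rw [ht]
  set b := t * 2 * D - w with hb
  have hwb : w + b = t * 2 * D := by omega
  have hu2 : w / t % 2 = w % (t * 2) / t := (Nat.mod_mul_right_div_self w t 2).symm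
  have hv2 : b / t % 2 = b % (t * 2) / t := (Nat.mod_mul_right_div_self b t 2).symm
  have hmod : (w + b) % (t * 2) = 0 := by
    rw [hwb, Nat.mul_mod_right]
  have huodd : w % (t * 2) % 2 = 1 := by
    rw [Nat.mod_mod_of_dvd w ⟨t, by ring⟩]; exact hodd
  have hult : w % (t * 2) < t * 2 := Nat.mod_lt _ (by omega)
  have hvlt : b % (t * 2) < t * 2 := Nat.mod_lt _ (by omega)
  have huvmod : (w % (t * 2) + b % (t * 2)) % (t * 2) = 0 := by
    rw [← Nat.add_mod]; exact hmod
  have hk : (w % (t * 2) + b % (t * 2)) / (t * 2) < 2 :=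
    Nat.div_lt_of_lt_mul (by omega)
  have hdm := Nat.div_add_mod (w % (t * 2) + b % (t * 2)) (t * 2)
  have huv : w % (t * 2) + b % (t * 2) = t * 2 := by
    interval_cases h : (w % (t * 2) + b % (t * 2)) / (t * 2) <;> omega
  rw [hu2, hv2]
  exact parity_core2 t _ _ htpos ht2 hult hvlt huv huodd

lemma cast_parity_eq {a b : ℕ} (h : a % 2 + b % 2 = 1) :
    ((b : ℕ) : ZMod 2) = ((a : ℕ) : ZMod 2) + 1 := by
  rw [← ZMod.natCast_mod a 2, ← ZMod.natCast_mod b 2]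
  rcases Nat.mod_two_eq_zero_or_one a with ha | ha <;>
    rcases Nat.mod_two_eq_zero_or_one b with hb | hb <;>
      rw [ha, hb] at h ⊢ <;> first | omega | decide

lemma exp_bal {N : ℕ} (F : (Fin N → ZMod 2) → ZMod 2)
    (g : (Fin N → ZMod 2) → (Fin N → ZMod 2))
    (hg : ∀ x, F (g x) = F x + 1) (hginv : ∀ x, g (g x) = x) : expSum F = 0 := by
  unfold expSum
  refine Finset.sum_ninvolution g (fun x => ?_) (fun x _ hgx => ?_)
    (fun x => Finset.mem_univ _) hginv
  · have key : ∀ a : ZMod 2, (-1:ℤ)^a.val + (-1:ℤ)^(a+1).val = 0 := by decide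
    rw [hg x]
    exact key (F x)
  · have := hg x
    rw [hgx] at this
    exact one_ne_zero (left_eq_add.mp this)

/-- The two-coordinate flip. -/
def flip2 {N : ℕ} (i0 i1 : Fin N) (x : Fin N → ZMod 2) : Fin N → ZMod 2 :=
  fun i => x i + (if i = i0 then 1 else 0) + (if i = i1 then 1 else 0)

lemma flip2_flip2 {N : ℕ} (i0 i1 : Fin N) (x : Fin N → ZMod 2) :
    flip2 i0 i1 (flip2 i0 i1 x) = x := by
  funext i
  unfold flip2
  split_ifs <;> (rcases zmod2_cases (x i) with h | h <;> rw [h] <;> decide)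

lemma wt_flip2 {N : ℕ} (i0 i1 : Fin N) (h01 : i0 ≠ i1) (x : Fin N → ZMod 2) :
    ((wt (flip2 i0 i1 x) : ℕ) : ZMod 2) = ((wt x : ℕ) : ZMod 2) := by
  rw [wt_parity, wt_parity]
  unfold flip2
  rw [Finset.sum_add_distrib, Finset.sum_add_distrib,
    Finset.sum_ite_eq' Finset.univ i0 (fun _ => (1 : ZMod 2)),
    Finset.sum_ite_eq' Finset.univ i1 (fun _ => (1 : ZMod 2))]
  simp only [Finset.mem_univ, if_true]
  rw [add_assoc]
  have h11 : (1 : ZMod 2) + 1 = 0 := by decide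
  rw [h11, add_zero]

/-- For positive integers `D`, `l`, `m` with `2m ≤ 2^{l+1}D − 1`, the perturbations
`σ_{2^{l+1}D−1,2^l} + X₁ + ⋯ + X_{2m}` and `σ_{2^{l+1}D,2^l+1} + X₁ + ⋯ + X_{2m}`
are balanced. -/
theorem trivially_balanced_family
    (D l m : ℕ) (hD : 1 ≤ D) (hl : 1 ≤ l) (hm : 1 ≤ m)
    (h2m : 2 * m ≤ 2 ^ (l + 1) * D - 1) :
    expSum (fun x : Fin (2 ^ (l + 1) * D - 1) → ZMod 2 =>
        sigma (2 ^ (l + 1) * D - 1) (2 ^ l) x +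
          ∑ i : Fin (2 * m), x (Fin.castLE h2m i)) = 0 ∧
    expSum (fun x : Fin (2 ^ (l + 1) * D) → ZMod 2 =>
        sigma (2 ^ (l + 1) * D) (2 ^ l + 1) x +
          ∑ i : Fin (2 * m), x (Fin.castLE (h2m.trans (Nat.sub_le _ _)) i)) = 0 := by
  have h2cast : ((2 * m : ℕ) : ZMod 2) = 0 := by
    rw [Nat.cast_mul, show ((2:ℕ) : ZMod 2) = 0 from by decide, zero_mul]
  have hMd : (2:ℕ) ∣ 2^(l+1) := dvd_pow_self 2 (Nat.succ_ne_zero l)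
  have hMD : 2^(l+1) * 1 ≤ 2^(l+1) * D := Nat.mul_le_mul_left _ hD
  have hM4 : 4 ≤ 2 ^ (l + 1) := by
    calc (4:ℕ) = 2 ^ 2 := by norm_num
    _ ≤ 2 ^ (l + 1) := Nat.pow_le_pow_right (by norm_num) (by omega)
  have hMN : 4 ≤ 2 ^ (l + 1) * D := le_trans hM4 (by simpa using hMD)
  have h2N : (2:ℕ) ∣ 2 ^ (l + 1) * D := hMd.mul_right D
  constructor
  · -- Part 1
    apply exp_bal _ (fun x => fun i => x i + 1)
    · intro x
      have hL : (∑ i : Fin (2 * m), (x (Fin.castLE h2m i) + 1))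
          = ∑ i : Fin (2 * m), x (Fin.castLE h2m i) := by
        rw [Finset.sum_add_distrib, Finset.sum_const]
        simp only [Finset.card_univ, Fintype.card_fin, nsmul_eq_mul, mul_one]
        rw [h2cast, add_zero]
      simp only []
      rw [hL, sigma_eq_choose, sigma_eq_choose, wt_compl, choose_two_pow, choose_two_pow]
      have key := parity1 l D (wt x) hD (wt_le x)
      have hkey : ((((2 ^ (l + 1) * D - 1) - wt x) / 2^l : ℕ)) = (((wt x / 2^l : ℕ)) : ZMod 2) + 1 :=
        cast_parity_eq key
      rw [hkey]
      ring
    · intro x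
      funext i
      show x i + 1 + 1 = x i
      rcases zmod2_cases (x i) with h | h <;> rw [h] <;> decide
  · -- Part 2
    have hNpos : 0 < 2 ^ (l + 1) * D := by omega
    set i0 : Fin (2 ^ (l + 1) * D) := ⟨0, hNpos⟩ with hi0
    set i1 : Fin (2 ^ (l + 1) * D) := ⟨2 ^ (l + 1) * D - 1, by omega⟩ with hi1
    have h01 : i0 ≠ i1 := by
      simp only [hi0, hi1, ne_eq, Fin.mk.injEq]
      omega
    have hL2m : 2 * m ≤ 2 ^ (l + 1) * D := h2m.trans (Nat.sub_le _ _)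
    have hsig : ∀ y : Fin (2 ^ (l + 1) * D) → ZMod 2, sigma (2 ^ (l + 1) * D) (2^l + 1) y
        = ((wt y / 2^l : ℕ) : ZMod 2) * ((wt y % 2 : ℕ) : ZMod 2) := fun y => by
      rw [sigma_eq_choose, choose_two_pow_succ _ _ hl]
    have hsig0 : ∀ y : Fin (2 ^ (l + 1) * D) → ZMod 2, wt y % 2 = 0 →
        sigma (2 ^ (l + 1) * D) (2^l + 1) y = 0 := by
      intro y hy
      rw [hsig y, hy]
      simp
    have hwtpar : ∀ y : Fin (2 ^ (l + 1) * D) → ZMod 2,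
        wt (flip2 i0 i1 y) % 2 = wt y % 2 :=
      fun y => (ZMod.natCast_eq_natCast_iff _ _ _).mp (wt_flip2 i0 i1 h01 y)
    have hwtcomplpar : ∀ y : Fin (2 ^ (l + 1) * D) → ZMod 2, wt y % 2 = 1 →
        wt (fun i => y i + 1) % 2 = 1 := by
      intro y hy
      rw [wt_compl]
      have := wt_le y
      omega
    apply exp_bal _ (fun x => if wt x % 2 = 1 then (fun i => x i + 1) else flip2 i0 i1 x)
    · intro x
      by_cases hpar : wt x % 2 = 1
      · -- complement branch
        rw [if_pos hpar]
        have hL : (∑ i : Fin (2 * m), (x (Fin.castLE hL2m i) + 1))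
            = ∑ i : Fin (2 * m), x (Fin.castLE hL2m i) := by
          rw [Finset.sum_add_distrib, Finset.sum_const]
          simp only [Finset.card_univ, Fintype.card_fin, nsmul_eq_mul, mul_one]
          rw [h2cast, add_zero]
        rw [hL, hsig, hsig, wt_compl]
        have hwle := wt_le x
        have hNw : (2 ^ (l + 1) * D - wt x) % 2 = 1 := by omega
        have key := parity2 l D (wt x) hl hD hwle hpar
        have hkey : (((2 ^ (l + 1) * D - wt x) / 2^l : ℕ) : ZMod 2)
            = ((wt x / 2^l : ℕ) : ZMod 2) + 1 := cast_parity_eq key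
        rw [hkey, hNw, hpar, Nat.cast_one]
        ring
      · -- flip2 branch
        rw [if_neg hpar]
        have hpar0 : wt x % 2 = 0 := by omega
        have hL : (∑ i : Fin (2 * m), flip2 i0 i1 x (Fin.castLE hL2m i))
            = (∑ i : Fin (2 * m), x (Fin.castLE hL2m i)) + 1 := by
          simp only [flip2]
          rw [Finset.sum_add_distrib, Finset.sum_add_distrib]
          have e1 : (∑ i : Fin (2 * m),
              (if Fin.castLE hL2m i = i0 then (1:ZMod 2) else 0)) = 1 := by
            have hc : ∀ i : Fin (2 * m),
                (Fin.castLE hL2m i = i0) ↔ (i = (⟨0, by omega⟩ : Fin (2 * m))) := by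
              intro i
              simp [Fin.ext_iff, hi0]
            rw [Finset.sum_congr rfl (fun i _ => if_congr (hc i) rfl rfl),
              Finset.sum_ite_eq' Finset.univ _ (fun _ => (1 : ZMod 2))]
            simp
          have e2 : (∑ i : Fin (2 * m),
              (if Fin.castLE hL2m i = i1 then (1:ZMod 2) else 0)) = 0 := by
            apply Finset.sum_eq_zero
            intro i _
            rw [if_neg]
            simp only [Fin.ext_iff, hi1, Fin.coe_castLE]
            have := i.2
            omega
          rw [e1, e2, add_zero]
        rw [hL, hsig0 _ hpar0, hsig0 _ (by rw [hwtpar]; exact hpar0)]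
        ring
    · intro x
      by_cases hpar : wt x % 2 = 1
      · rw [if_pos hpar, if_pos (hwtcomplpar x hpar)]
        funext i
        show x i + 1 + 1 = x i
        rcases zmod2_cases (x i) with h | h <;> rw [h] <;> decide
      · rw [if_neg hpar, if_neg (by rw [hwtpar]; exact hpar)]
        exact flip2_flip2 i0 i1 x
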